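/- Let f : ℝ² → ℝ be twice continuously differentiable with ∂²f/∂x∂y ≡ 0 on a convex open set containing [0,1]², and suppose f is skew-symmetric (f(α,β) = -f(β,α)) with f(α,0) = -dα. Then f(α,β) = d(β-α) for all α, β ∈ [0,1]. -/

import Mathlib

open Set

/-- Let `f : ℝ² → ℝ` be twice continuously differentiable on a convex open set
containing `[0,1]²`, with vanishing mixed partial `∂²f/∂x∂y`, skew-symmetric
(`f(α,β) = -f(β,α)`), and `f(α,0) = -dα`. Then `f(α,β) = d(β-α)` on `[0,1]²`. -/
theorem stmt_15 (d : ℝ) (f : ℝ → ℝ → ℝ) (U : Set (ℝ × ℝ))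
    (hUopen : IsOpen U) (hUconv : Convex ℝ U)
    (hUsub : Icc ((0:ℝ), (0:ℝ)) (1, 1) ⊆ U)
    (hf : ContDiffOn ℝ 2 (fun p : ℝ × ℝ => f p.1 p.2) U)
    (hmixed : ∀ p ∈ U, deriv (fun x => deriv (fun y => f x y) p.2) p.1 = 0)
    (hskew : ∀ α β : ℝ, f α β = -f β α)
    (hbdy : ∀ α : ℝ, f α 0 = -d * α) :
    ∀ α ∈ Icc (0:ℝ) 1, ∀ β ∈ Icc (0:ℝ) 1, f α β = d * (β - α) := by
  intro α hα β hβ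
  set F : ℝ × ℝ → ℝ := fun p => f p.1 p.2 with hFdef
  have hmem : ∀ x ∈ Icc (0:ℝ) 1, ∀ y ∈ Icc (0:ℝ) 1, ((x, y) : ℝ × ℝ) ∈ U := by
    intro x hx y hy
    exact hUsub ⟨⟨hx.1, hy.1⟩, ⟨hx.2, hy.2⟩⟩
  have hFdiff : ∀ p ∈ U, DifferentiableAt ℝ F p := by
    intro p hp
    exact (hf.differentiableOn (by norm_num)).differentiableAt (hUopen.mem_nhds hp)
  -- partial derivative in y as value of fderiv
  have hDy : ∀ p ∈ U, HasDerivAt (fun t => f p.1 t) (fderiv ℝ F p (0, 1)) p.2 := by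
    intro p hp
    have h1 : HasDerivAt (fun t : ℝ => ((p.1, t) : ℝ × ℝ)) ((0 : ℝ), (1 : ℝ)) p.2 :=
      (hasDerivAt_const _ _).prodMk (hasDerivAt_id _)
    exact (hFdiff p hp).hasFDerivAt.comp_hasDerivAt p.2 h1
  have hD1 : ContDiffOn ℝ 1 (fun p => fderiv ℝ F p) U :=
    hf.fderiv_of_isOpen hUopen (by norm_num)
  -- the function x ↦ ∂f/∂y (x, y) has derivative 0 on [0,1]
  have hgdiff : ∀ y ∈ Icc (0:ℝ) 1, ∀ x ∈ Icc (0:ℝ) 1,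
      HasDerivAt (fun x' => deriv (fun t => f x' t) y) 0 x := by
    intro y hy x hx
    have hxy : ((x, y) : ℝ × ℝ) ∈ U := hmem x hx y hy
    have hdiff : DifferentiableAt ℝ (fun x' => deriv (fun t => f x' t) y) x := by
      have h2 : DifferentiableAt ℝ (fun p : ℝ × ℝ => fderiv ℝ F p) (x, y) :=
        (hD1.differentiableOn one_ne_zero).differentiableAt (hUopen.mem_nhds hxy)
      have h1 : DifferentiableAt ℝ (fun x' : ℝ => fderiv ℝ F (x', y) (0, 1)) x := by
        have hc : DifferentiableAt ℝ (fun x' : ℝ => ((x', y) : ℝ × ℝ)) x :=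
          differentiableAt_id.prodMk (differentiableAt_const _)
        exact ((h2.comp x hc).clm_apply (differentiableAt_const _))
      refine h1.congr_of_eventuallyEq ?_
      have hcont : Continuous (fun x' : ℝ => ((x', y) : ℝ × ℝ)) :=
        continuous_id.prodMk continuous_const
      have hnhd : {x' : ℝ | ((x', y) : ℝ × ℝ) ∈ U} ∈ nhds x :=
        (hUopen.preimage hcont).mem_nhds hxy
      filter_upwards [hnhd] with x' hx'
      exact (hDy (x', y) hx').deriv
    have h0 : deriv (fun x' => deriv (fun t => f x' t) y) x = 0 := hmixed (x, y) hxy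
    have := hdiff.hasDerivAt
    rwa [h0] at this
  -- constancy from zero derivative
  have const : ∀ (g : ℝ → ℝ), (∀ x ∈ Icc (0:ℝ) 1, HasDerivAt g 0 x) →
      ∀ x ∈ Icc (0:ℝ) 1, g x = g 0 := by
    intro g hg x hx
    have hcont : ContinuousOn g (Icc 0 1) := fun t ht =>
      (hg t ht).continuousAt.continuousWithinAt
    have hderiv : ∀ t ∈ Ico (0:ℝ) 1, HasDerivWithinAt g 0 (Ici t) t := fun t ht =>
      (hg t (Ico_subset_Icc_self ht)).hasDerivWithinAt
    exact constant_of_has_deriv_right_zero hcont hderiv x hx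
  have key1 : ∀ y ∈ Icc (0:ℝ) 1, ∀ x ∈ Icc (0:ℝ) 1,
      deriv (fun t => f x t) y = deriv (fun t => f 0 t) y := by
    intro y hy x hx
    exact const _ (hgdiff y hy) x hx
  -- f α t - f 0 t has zero derivative in t
  have hh : ∀ t ∈ Icc (0:ℝ) 1, HasDerivAt (fun t => f α t - f 0 t) 0 t := by
    intro t ht
    have h1 := hDy (α, t) (hmem α hα t ht)
    have h2 := hDy (0, t) (hmem 0 (by norm_num) t ht)
    have heq : fderiv ℝ F (α, t) (0, 1) = fderiv ℝ F ((0 : ℝ), t) (0, 1) := by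
      rw [← h1.deriv, ← h2.deriv]
      exact key1 t ht α hα
    have h3 := h1.sub h2
    rw [heq, sub_self] at h3
    exact h3
  have hfin := const _ hh β hβ
  have h00 : f 0 0 = 0 := by have := hskew 0 0; linarith
  have h0β : f 0 β = d * β := by
    have := hskew 0 β
    rw [hbdy β] at this
    linarith
  have hα0 : f α 0 = -d * α := hbdy α
  have hd : d * (β - α) = d * β - d * α := by ring
  rw [hd]
  rw [h00, h0β, hα0] at hfin
  linarith
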